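/- For every integer l ≥ 1, ∫₀¹ P_{2l−1}^{(1,1)}(2t−1) · t(1−t) · ln(t/(1−t)) dt = 1/((2l−1)(2l+1)(l+1)). -/

import Mathlib

open MeasureTheory Real

/-- The Jacobi polynomial with parameters `(1,1)`:
`P_n^{(1,1)}(x) = Σ_{s=0}^{n} C(n+1, n−s) · C(n+1, s) · ((x−1)/2)^s · ((x+1)/2)^{n−s}`. -/
noncomputable def jacobiP (n : ℕ) (x : ℝ) : ℝ :=
  ∑ s ∈ Finset.range (n + 1),
    (Nat.choose (n + 1) (n - s) : ℝ) * (Nat.choose (n + 1) s : ℝ) *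
      ((x - 1) / 2) ^ s * ((x + 1) / 2) ^ (n - s)

section helpers
open Finset intervalIntegral


noncomputable def H (n : ℕ) : ℝ := ∑ i ∈ Finset.range n, (1:ℝ)/(i+1)

lemma H_zero : H 0 = 0 := by simp [H]

lemma H_succ (n : ℕ) : H (n+1) = H n + 1/(n+1) := by
  simp [H, Finset.sum_range_succ]

lemma alt_sum_choose_real (n : ℕ) (hn : n ≠ 0) :
    ∑ i ∈ Finset.range (n+1), (-1:ℝ)^i * (n.choose i) = 0 := by
  have h := Int.alternating_sum_range_choose_of_ne hn
  have h2 : ((∑ i ∈ Finset.range (n + 1), (-1:ℤ) ^ i * (n.choose i) : ℤ) : ℝ) = 0 := by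
    rw [h]; simp
  push_cast at h2
  exact h2

lemma sum_alt_choose_div (k : ℕ) :
    ∑ j ∈ Finset.range (k+1), (-1:ℝ)^j * (k.choose j) / (j+1) = 1/(k+1) := by
  have hk1 : ((k:ℝ)+1) ≠ 0 := by positivity
  rw [eq_div_iff hk1, Finset.sum_mul]
  have key : ∀ j ∈ Finset.range (k+1),
      (-1:ℝ)^j * (k.choose j) / (j+1) * (k+1) = (-1:ℝ)^j * ((k+1).choose (j+1)) := by
    intro j _
    have h' : ((k:ℝ)+1) * (k.choose j) = ((k+1).choose (j+1)) * ((j:ℝ)+1) := by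
      exact_mod_cast Nat.add_one_mul_choose_eq k j
    have hj : ((j:ℝ)+1) ≠ 0 := by positivity
    rw [div_mul_eq_mul_div, div_eq_iff hj]
    linear_combination ((-1:ℝ)^j) * h'
  rw [Finset.sum_congr rfl key]
  have h0 := alt_sum_choose_real (k+1) (Nat.succ_ne_zero k)
  rw [Finset.sum_range_succ'] at h0
  simp only [pow_succ, pow_zero, Nat.choose_zero_right, Nat.cast_one, one_mul, mul_one] at h0
  -- h0 : ∑ i ∈ range (k+1), (-1)^i * -1 * C(k+1,i+1) + 1 = 0
  have hneg : ∑ x ∈ Finset.range (k+1), (-1:ℝ)^x * -1 * ((k+1).choose (x+1))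
      = -∑ x ∈ Finset.range (k+1), (-1:ℝ)^x * ((k+1).choose (x+1)) := by
    rw [← Finset.sum_neg_distrib]
    exact Finset.sum_congr rfl fun j _ => by ring
  rw [hneg] at h0
  linarith

lemma sum_alt_choose_H (m : ℕ) :
    ∑ s ∈ Finset.range (m+2), (-1:ℝ)^s * ((m+1).choose s) * H s = -1/(m+1) := by
  rw [Finset.sum_range_succ']
  have hsplit : ∀ i ∈ Finset.range (m+1), (-1:ℝ)^(i+1) * ((m+1).choose (i+1)) * H (i+1)
      = (-((-1:ℝ)^i * (m.choose i) * H i) - (-1:ℝ)^i * (m.choose i) / (i+1))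
        + (-1:ℝ)^(i+1) * (m.choose (i+1)) * H (i+1) := by
    intro i _
    have hc : (((m+1).choose (i+1)) : ℝ) = (m.choose i) + (m.choose (i+1)) := by
      exact_mod_cast Nat.choose_succ_succ m i
    rw [hc, H_succ]
    have hi : ((i:ℝ)+1) ≠ 0 := by positivity
    field_simp
    ring
  rw [Finset.sum_congr rfl hsplit, Finset.sum_add_distrib, Finset.sum_sub_distrib]
  have hCA : ∑ i ∈ Finset.range (m+1), (-1:ℝ)^(i+1) * (m.choose (i+1)) * H (i+1)
      = ∑ i ∈ Finset.range (m+1), (-1:ℝ)^i * (m.choose i) * H i := by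
    have h1 := Finset.sum_range_succ' (fun s => (-1:ℝ)^s * (m.choose s) * H s) (m+1)
    have h2 := Finset.sum_range_succ (fun s => (-1:ℝ)^s * (m.choose s) * H s) (m+1)
    simp only [Nat.choose_succ_self, Nat.cast_zero, mul_zero, zero_mul, add_zero,
      pow_zero, Nat.choose_zero_right, Nat.cast_one, one_mul, H_zero, mul_zero] at h1 h2
    rw [h2] at h1
    exact h1.symm
  have hneg : ∑ i ∈ Finset.range (m+1), -((-1:ℝ)^i * (m.choose i) * H i)
      = -∑ i ∈ Finset.range (m+1), (-1:ℝ)^i * (m.choose i) * H i := by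
    rw [← Finset.sum_neg_distrib]
  rw [hCA, hneg, sum_alt_choose_div m]
  simp [H_zero]
  ring

lemma sum_alt_choose_H1 (n : ℕ) (hn : 1 ≤ n) :
    ∑ s ∈ Finset.range (n+1), (-1:ℝ)^s * (n.choose s) * H (s+1) = -1/(n*(n+1)) := by
  obtain ⟨m, rfl⟩ : ∃ m, n = m+1 := ⟨n-1, by omega⟩
  have h1 : ∑ s ∈ Finset.range (m+2), (-1:ℝ)^s * ((m+1).choose s) * H (s+1)
      = ∑ s ∈ Finset.range (m+2), ((-1:ℝ)^s * ((m+1).choose s) * H s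
          + (-1:ℝ)^s * ((m+1).choose s) / (s+1)) := by
    refine Finset.sum_congr rfl fun s _ => ?_
    rw [H_succ]; ring
  rw [h1, Finset.sum_add_distrib, sum_alt_choose_H m, sum_alt_choose_div (m+1)]
  have h2 : ((m:ℝ)+1) ≠ 0 := by positivity
  have h3 : ((m:ℝ)+2) ≠ 0 := by positivity
  push_cast
  field_simp
  ring

lemma sum_alt_choose_Hdiff (n : ℕ) (hn : 1 ≤ n) (hodd : Odd n) :
    ∑ s ∈ Finset.range (n+1), (-1:ℝ)^s * (n.choose s) * (H (n-s+1) - H (s+1))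
      = 2/(n*(n+1)) := by
  have hrefl : ∑ s ∈ Finset.range (n+1), (-1:ℝ)^s * (n.choose s) * H (n-s+1)
      = ∑ s ∈ Finset.range (n+1), -((-1:ℝ)^s * (n.choose s) * H (s+1)) := by
    rw [← Finset.sum_range_reflect (fun s => (-1:ℝ)^s * (n.choose s) * H (n-s+1)) (n+1)]
    refine Finset.sum_congr rfl fun s hs => ?_
    have hsle : s ≤ n := by simpa [Nat.lt_succ_iff] using hs
    have e1 : n + 1 - 1 - s = n - s := by omega
    have e2 : n - (n - s) = s := by omega
    rw [e1, e2, Nat.choose_symm hsle]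
    have hx : (-1:ℝ)^s * (-1)^s = 1 := by
      rw [← pow_add]; exact Even.neg_one_pow ⟨s, rfl⟩
    have h1 : (-1:ℝ)^(n-s) * (-1)^s = -1 := by
      rw [← pow_add, Nat.sub_add_cancel hsle]; exact Odd.neg_one_pow hodd
    have hsgn : (-1:ℝ)^(n-s) = -(-1:ℝ)^s := by
      linear_combination ((-1:ℝ)^s) * h1 - ((-1:ℝ)^(n-s)) * hx
    rw [hsgn]; ring
  have hexp : ∑ s ∈ Finset.range (n+1), (-1:ℝ)^s * (n.choose s) * (H (n-s+1) - H (s+1))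
      = ∑ s ∈ Finset.range (n+1), (-1:ℝ)^s * (n.choose s) * H (n-s+1)
        - ∑ s ∈ Finset.range (n+1), (-1:ℝ)^s * (n.choose s) * H (s+1) := by
    rw [← Finset.sum_sub_distrib]
    exact Finset.sum_congr rfl fun s _ => by ring
  rw [hexp, hrefl, Finset.sum_neg_distrib, sum_alt_choose_H1 n hn]
  have h2 : (n:ℝ) ≠ 0 := by positivity
  have h3 : ((n:ℝ)+1) ≠ 0 := by positivity
  field_simp
  norm_num

lemma intInt_log01 : IntervalIntegrable Real.log volume 0 1 := by
  rw [intervalIntegrable_iff_integrableOn_Ioc_of_le zero_le_one]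
  have hg : IntegrableOn (fun t : ℝ => 2 * t ^ (-(1/2) : ℝ)) (Set.Ioc 0 1) volume := by
    have := (intervalIntegral.intervalIntegrable_rpow' (a := 0) (b := 1)
      (r := -(1/2)) (by norm_num)).const_mul 2
    rwa [intervalIntegrable_iff_integrableOn_Ioc_of_le zero_le_one] at this
  refine Integrable.mono' hg Real.measurable_log.aestronglyMeasurable ?_
  refine (ae_restrict_iff' measurableSet_Ioc).2 (Filter.Eventually.of_forall ?_)
  intro t ht
  have ht0 : 0 < t := ht.1
  have ht1 : t ≤ 1 := ht.2
  have hrp : 0 < t ^ (-(1/2) : ℝ) := Real.rpow_pos_of_pos ht0 _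
  rw [Real.norm_eq_abs, abs_le]
  constructor
  · -- -(2 t^(-1/2)) ≤ log t, i.e. -log t ≤ 2 t^(-1/2)
    have h1 : Real.log (t ^ (-(1/2) : ℝ)) ≤ t ^ (-(1/2) : ℝ) - 1 :=
      Real.log_le_sub_one_of_pos hrp
    rw [Real.log_rpow ht0] at h1
    nlinarith [hrp]
  · have h2 : Real.log t ≤ t - 1 := Real.log_le_sub_one_of_pos ht0
    nlinarith [hrp]

lemma contOn_pow_mul_log (m : ℕ) : ContinuousOn (fun t : ℝ => t ^ (m+1) * Real.log t) (Set.Icc 0 1) := by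
  intro x hx
  rcases eq_or_ne x 0 with rfl | hx0
  · -- continuity at 0
    rw [ContinuousWithinAt]
    have hval : (0:ℝ) ^ (m+1) * Real.log 0 = 0 := by simp
    rw [hval]
    have htend : Filter.Tendsto (fun t : ℝ => t ^ (m+1) * Real.log t) (nhdsWithin 0 (Set.Ioi 0)) (nhds 0) := by
      have h := tendsto_log_mul_rpow_nhdsGT_zero (r := (m:ℝ)+1) (by positivity)
      refine h.congr' ?_
      filter_upwards [self_mem_nhdsWithin] with t ht
      rw [show ((m:ℝ)+1) = ((m+1 : ℕ) : ℝ) by push_cast; ring,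
        Real.rpow_natCast]
      ring
    have hsub : Set.Icc (0:ℝ) 1 ⊆ insert 0 (Set.Ioi 0) := by
      intro y hy
      rcases eq_or_lt_of_le hy.1 with h | h
      · exact Set.mem_insert_iff.2 (Or.inl h.symm)
      · exact Set.mem_insert_iff.2 (Or.inr h)
    refine Filter.Tendsto.mono_left ?_ (nhdsWithin_mono _ hsub)
    rw [nhdsWithin_insert]
    refine Filter.Tendsto.sup ?_ htend
    simpa [hval] using tendsto_pure_nhds (fun t : ℝ => t ^ (m+1) * Real.log t) 0
  · exact ((continuous_pow (m+1)).continuousAt.mul (Real.continuousAt_log hx0)).continuousWithinAt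

lemma intInt_pml (a b : ℕ) :
    IntervalIntegrable (fun t : ℝ => t ^ a * (1-t) ^ b * Real.log t) volume 0 1 := by
  have hc : ContinuousOn (fun t : ℝ => t ^ a * (1-t) ^ b) (Set.uIcc (0:ℝ) 1) :=
    (Continuous.continuousOn (by continuity))
  simpa [mul_assoc] using intInt_log01.continuousOn_mul hc

lemma intInt_pml' (a b : ℕ) :
    IntervalIntegrable (fun t : ℝ => t ^ a * (1-t) ^ b * Real.log (1-t)) volume 0 1 := by
  have h := ((intInt_pml b a).comp_sub_left 1).symm
  have h2 : (fun x : ℝ => (1-x) ^ b * (1-(1-x)) ^ a * Real.log (1-x))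
      = fun t : ℝ => t ^ a * (1-t) ^ b * Real.log (1-t) := by
    funext t; ring_nf
  simp only [sub_self, sub_zero] at h
  rw [h2] at h
  exact h

lemma integral_pow_mul_log (k : ℕ) :
    ∫ t in (0:ℝ)..1, t ^ k * Real.log t = -(1/((k:ℝ)+1)^2) := by
  have hk : ((k:ℝ)+1) ≠ 0 := by positivity
  set F : ℝ → ℝ := fun t => t ^ (k+1) * Real.log t / ((k:ℝ)+1) - t ^ (k+1) / ((k:ℝ)+1)^2 with hF
  have hcont : ContinuousOn F (Set.Icc 0 1) := by
    apply ContinuousOn.sub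
    · exact (contOn_pow_mul_log k).div_const _
    · exact ((continuous_pow (k+1)).continuousOn).div_const _
  have hderiv : ∀ x ∈ Set.Ioo (0:ℝ) 1, HasDerivAt F (x ^ k * Real.log x) x := by
    intro x hx
    have hx0 : x ≠ 0 := ne_of_gt hx.1
    have h1 : HasDerivAt (fun t : ℝ => t ^ (k+1)) (((k:ℝ)+1) * x ^ k) x := by
      simpa using hasDerivAt_pow (k+1) x
    have h2 : HasDerivAt Real.log x⁻¹ x := Real.hasDerivAt_log hx0
    have h3 := ((h1.mul h2).div_const ((k:ℝ)+1)).sub (h1.div_const (((k:ℝ)+1)^2))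
    convert h3 using 1
    · rfl
    · rfl
    · rfl
    have : x ^ (k+1) * x⁻¹ = x ^ k := by
      rw [pow_succ, mul_assoc, mul_inv_cancel₀ hx0, mul_one]
    rw [this]
    field_simp
    ring
  have hint : IntervalIntegrable (fun t : ℝ => t ^ k * Real.log t) volume 0 1 := by
    simpa using intInt_pml k 0
  have := intervalIntegral.integral_eq_sub_of_hasDerivAt_of_le zero_le_one hcont hderiv hint
  rw [this, hF]
  simp [Real.log_zero, zero_pow (Nat.succ_ne_zero k)]

noncomputable def Glog (a b : ℕ) : ℝ := ∫ t in (0:ℝ)..1, t ^ a * (1-t) ^ b * Real.log t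

lemma Glog_zero (a : ℕ) : Glog a 0 = -(1/((a:ℝ)+1)^2) := by
  have h := integral_pow_mul_log a
  rw [Glog]
  simp only [pow_zero, mul_one]
  exact h

lemma Glog_rec (a b : ℕ) : Glog a (b+1) = Glog a b - Glog (a+1) b := by
  have hp : ∀ t : ℝ, t ^ a * (1-t)^(b+1) * Real.log t
      = t ^ a * (1-t)^b * Real.log t - t^(a+1) * (1-t)^b * Real.log t := by
    intro t; ring
  rw [Glog, Glog, Glog]
  simp_rw [hp]
  exact intervalIntegral.integral_sub (intInt_pml a b) (intInt_pml (a+1) b)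

lemma Glog_eq : ∀ (b a : ℕ), Glog a b
    = -((a.factorial : ℝ) * b.factorial / (a+b+1).factorial) * (H (a+b+1) - H a) := by
  intro b
  induction b with
  | zero =>
    intro a
    rw [Glog_zero]
    simp only [Nat.add_zero, Nat.factorial, Nat.cast_one, mul_one]
    rw [H_succ a]
    have ha : ((a:ℝ)+1) ≠ 0 := by positivity
    have hf : (a.factorial : ℝ) ≠ 0 := by
      exact_mod_cast Nat.factorial_ne_zero a
    push_cast
    field_simp
    ring
  | succ b ih =>
    intro a
    rw [Glog_rec, ih a, ih (a+1)]
    have e1 : a + 1 + b + 1 = a + b + 2 := by omega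
    have e2 : a + (b+1) + 1 = a + b + 2 := by omega
    rw [e1, e2]
    have hf1 : ((a+b+2).factorial : ℝ) = ((a:ℝ)+(b:ℝ)+2) * (a+b+1).factorial := by
      have : a + b + 2 = (a+b+1) + 1 := by omega
      rw [this, Nat.factorial_succ]; push_cast; ring
    have hf2 : (((b:ℕ)+1).factorial : ℝ) = ((b:ℝ)+1) * b.factorial := by
      rw [Nat.factorial_succ]; push_cast; ring
    have hf3 : (((a:ℕ)+1).factorial : ℝ) = ((a:ℝ)+1) * a.factorial := by
      rw [Nat.factorial_succ]; push_cast; ring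
    have hH1 : H (a+b+2) = H (a+b+1) + 1/((a:ℝ)+(b:ℝ)+2) := by
      have : a + b + 2 = (a+b+1) + 1 := by omega
      rw [this, H_succ]; push_cast; ring_nf
    have hH2 : H (a+1) = H a + 1/((a:ℝ)+1) := by
      rw [H_succ]
    rw [hf1, hf2, hf3, hH1, hH2]
    have ha : ((a:ℝ)+1) ≠ 0 := by positivity
    have hab : ((a:ℝ)+(b:ℝ)+2) ≠ 0 := by positivity
    have hfa : (a.factorial : ℝ) ≠ 0 := by exact_mod_cast Nat.factorial_ne_zero a
    have hfb : (b.factorial : ℝ) ≠ 0 := by exact_mod_cast Nat.factorial_ne_zero b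
    have hfp : ((a+b+1).factorial : ℝ) ≠ 0 := by exact_mod_cast Nat.factorial_ne_zero (a+b+1)
    field_simp
    ring

lemma Glog_flip (a b : ℕ) :
    ∫ t in (0:ℝ)..1, t^a*(1-t)^b*Real.log (1-t) = Glog b a := by
  have key := intervalIntegral.integral_comp_sub_left (a := (0:ℝ)) (b := 1)
    (fun x : ℝ => x^b*(1-x)^a*Real.log x) 1
  norm_num at key
  rw [Glog, ← key]
  apply intervalIntegral.integral_congr
  intro t _
  simp only [sub_sub_cancel]
  ring

lemma Jdiff (a b : ℕ) :
    ∫ t in (0:ℝ)..1, t^a*(1-t)^b*(Real.log t - Real.log (1-t))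
      = ((a.factorial:ℝ)*b.factorial/((a+b+1).factorial)) * (H a - H b) := by
  simp_rw [mul_sub]
  rw [intervalIntegral.integral_sub (intInt_pml a b) (intInt_pml' a b)]
  have h1 : (∫ t in (0:ℝ)..1, t^a*(1-t)^b*Real.log t) = Glog a b := rfl
  rw [h1, Glog_flip, Glog_eq, Glog_eq]
  have e1 : b + a + 1 = a + b + 1 := by omega
  rw [e1]
  ring

lemma log_split (t : ℝ) : Real.log (t/(1-t)) = Real.log t - Real.log (1-t) := by
  by_cases h0 : t = 0
  · simp [h0]
  by_cases h1 : t = 1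
  · simp [h1]
  have h1' : 1 - t ≠ 0 := fun h => h1 (by linarith)
  rw [Real.log_div h0 h1']

-- coefficient identity

lemma coeff_id (n s : ℕ) (hs : s ≤ n) :
    ((n+1).choose (n-s) : ℝ) * ((n+1).choose s : ℝ)
        * (((n-s+1).factorial : ℝ) * ((s+1).factorial) / ((n+3).factorial))
      = ((n:ℝ)+1) * (n.choose s) / (((n:ℝ)+2)*((n:ℝ)+3)) := by
  have e1 : n + 1 - (n - s) = s + 1 := by omega
  have nat1 := Nat.choose_mul_factorial_mul_factorial (show n - s ≤ n + 1 by omega)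
  rw [e1] at nat1
  -- nat1 : (n+1).choose (n-s) * (n-s)! * (s+1)! = (n+1)!
  have nat2 : ((n+1).choose s) * (n - s + 1) = (n+1) * n.choose s := by
    have h2 := Nat.choose_mul_factorial_mul_factorial (show s ≤ n + 1 by omega)
    have h3 := Nat.choose_mul_factorial_mul_factorial hs
    have e2 : n + 1 - s = (n - s) + 1 := by omega
    rw [e2, Nat.factorial_succ] at h2
    have key : ((n+1).choose s * (n - s + 1)) * (s.factorial * (n-s).factorial)
        = ((n+1) * n.choose s) * (s.factorial * (n-s).factorial) := by
      calc ((n+1).choose s * (n - s + 1)) * (s.factorial * (n-s).factorial)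
          = (n+1).choose s * s.factorial * ((n-s+1) * (n-s).factorial) := by ring
        _ = (n+1).factorial := h2
        _ = (n+1) * n.factorial := Nat.factorial_succ n
        _ = (n+1) * (n.choose s * s.factorial * (n-s).factorial) := by rw [h3]
        _ = ((n+1) * n.choose s) * (s.factorial * (n-s).factorial) := by ring
    exact Nat.eq_of_mul_eq_mul_right
      (Nat.mul_pos s.factorial_pos (n-s).factorial_pos) key
  have f1 : (((n+1).choose (n-s)) : ℝ) * ((n-s).factorial) * ((s+1).factorial)
      = ((n+1).factorial : ℝ) := by exact_mod_cast nat1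
  have f2 : (((n+1).choose s) : ℝ) * ((n:ℝ) - (s:ℝ) + 1) = ((n:ℝ)+1) * (n.choose s) := by
    have : (((n+1).choose s) : ℝ) * (((n - s : ℕ) : ℝ) + 1) = ((n:ℝ)+1) * (n.choose s) := by
      exact_mod_cast nat2
    rwa [Nat.cast_sub hs] at this
  have hfns : ((n-s+1).factorial : ℝ) = (((n:ℝ) - (s:ℝ)) + 1) * ((n-s).factorial) := by
    rw [Nat.factorial_succ]
    push_cast [Nat.cast_sub hs]
    ring
  have hf3 : ((n+3).factorial : ℝ) = ((n:ℝ)+3) * ((n:ℝ)+2) * ((n+1).factorial) := by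
    have : n + 3 = (n+2) + 1 := by omega
    rw [this, Nat.factorial_succ, Nat.factorial_succ]
    push_cast
    ring
  rw [hfns, hf3]
  have hne1 : ((n+1).factorial : ℝ) ≠ 0 := by exact_mod_cast Nat.factorial_ne_zero (n+1)
  have hne2 : ((n:ℝ)+2) ≠ 0 := by positivity
  have hne3 : ((n:ℝ)+3) ≠ 0 := by positivity
  rw [← mul_div_assoc, div_eq_div_iff (by positivity) (by positivity)]
  calc ((n+1).choose (n-s) : ℝ) * ((n+1).choose s : ℝ)
        * (((n:ℝ) - (s:ℝ) + 1) * ((n-s).factorial) * ((s+1).factorial))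
        * (((n:ℝ)+2)*((n:ℝ)+3))
      = (((n+1).choose (n-s) : ℝ) * ((n-s).factorial) * ((s+1).factorial))
          * (((n+1).choose s : ℝ) * ((n:ℝ) - (s:ℝ) + 1)) * (((n:ℝ)+2)*((n:ℝ)+3)) := by ring
    _ = ((n+1).factorial : ℝ) * (((n:ℝ)+1) * (n.choose s)) * (((n:ℝ)+2)*((n:ℝ)+3)) := by
        rw [f1, f2]
    _ = ((n:ℝ)+1) * (n.choose s) * (((n:ℝ)+3) * ((n:ℝ)+2) * ((n+1).factorial)) := by ring

lemma main_n (n : ℕ) (hn : 1 ≤ n) (hodd : Odd n) :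
    ∫ t in (0:ℝ)..1, jacobiP n (2*t-1) * (t*(1-t)) * Real.log (t/(1-t))
      = 2/((n:ℝ)*((n:ℝ)+2)*((n:ℝ)+3)) := by
  have hpt : ∀ t : ℝ, jacobiP n (2*t-1) * (t*(1-t)) * Real.log (t/(1-t))
      = ∑ s ∈ Finset.range (n+1), (((n+1).choose (n-s) : ℝ) * ((n+1).choose s) * (-1)^s)
          * (t^(n-s+1) * (1-t)^(s+1) * (Real.log t - Real.log (1-t))) := by
    intro t
    rw [log_split, jacobiP, Finset.sum_mul, Finset.sum_mul]
    refine Finset.sum_congr rfl fun s hs => ?_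
    have e1 : (2*t-1-1)/2 = -(1-t) := by ring
    have e2 : (2*t-1+1)/2 = t := by ring
    rw [e1, e2, neg_pow]
    rw [pow_succ t (n-s), pow_succ (1-t) s]
    ring
  simp_rw [hpt]
  have hint : ∀ (c : ℝ) (p q : ℕ), IntervalIntegrable
      (fun t : ℝ => c * (t^p * (1-t)^q * (Real.log t - Real.log (1-t)))) volume 0 1 := by
    intro c p q
    have h := ((intInt_pml p q).sub (intInt_pml' p q)).const_mul c
    have he : (fun t : ℝ => c * (t^p*(1-t)^q*Real.log t - t^p*(1-t)^q*Real.log (1-t)))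
        = fun t : ℝ => c * (t^p * (1-t)^q * (Real.log t - Real.log (1-t))) := by
      funext t; ring
    rwa [he] at h
  rw [intervalIntegral.integral_finset_sum (fun s _ => hint _ _ _)]
  have hval : ∀ s ∈ Finset.range (n+1),
      (∫ t in (0:ℝ)..1, (((n+1).choose (n-s) : ℝ) * ((n+1).choose s) * (-1)^s)
          * (t^(n-s+1) * (1-t)^(s+1) * (Real.log t - Real.log (1-t))))
      = ((-1:ℝ)^s * (n.choose s) * (H (n-s+1) - H (s+1)))
          * (((n:ℝ)+1)/(((n:ℝ)+2)*((n:ℝ)+3))) := by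
    intro s hs
    have hsle : s ≤ n := Nat.lt_succ_iff.mp (Finset.mem_range.mp hs)
    rw [intervalIntegral.integral_const_mul, Jdiff]
    have e3 : (n-s+1) + (s+1) + 1 = n + 3 := by omega
    rw [e3]
    have hc := coeff_id n s hsle
    calc (((n+1).choose (n-s) : ℝ) * ((n+1).choose s) * (-1)^s)
          * ((((n-s+1).factorial : ℝ)*((s+1).factorial)/((n+3).factorial))
              * (H (n-s+1) - H (s+1)))
        = (((n+1).choose (n-s) : ℝ) * ((n+1).choose s)
            * (((n-s+1).factorial : ℝ)*((s+1).factorial)/((n+3).factorial)))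
            * ((-1)^s * (H (n-s+1) - H (s+1))) := by ring
      _ = (((n:ℝ)+1) * (n.choose s) / (((n:ℝ)+2)*((n:ℝ)+3)))
            * ((-1)^s * (H (n-s+1) - H (s+1))) := by rw [hc]
      _ = ((-1:ℝ)^s * (n.choose s) * (H (n-s+1) - H (s+1)))
            * (((n:ℝ)+1)/(((n:ℝ)+2)*((n:ℝ)+3))) := by ring
  rw [Finset.sum_congr rfl hval, ← Finset.sum_mul, sum_alt_choose_Hdiff n hn hodd]
  have h1 : (n:ℝ) ≠ 0 := by
    have : 0 < n := hn
    positivity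
  have h2 : ((n:ℝ)+1) ≠ 0 := by positivity
  have h3 : ((n:ℝ)+2) ≠ 0 := by positivity
  have h4 : ((n:ℝ)+3) ≠ 0 := by positivity
  field_simp

end helpers

/-- For every `l ≥ 1`,
`∫₀¹ P_{2l−1}^{(1,1)}(2t−1) · t(1−t) · ln(t/(1−t)) dt = 1/((2l−1)(2l+1)(l+1))`. -/
theorem jacobi_odd_weighted_log_integral (l : ℕ) (hl : 1 ≤ l) :
    ∫ t in (0:ℝ)..1, jacobiP (2 * l - 1) (2 * t - 1) * (t * (1 - t)) *
        Real.log (t / (1 - t))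
      = 1 / ((2 * (l : ℝ) - 1) * (2 * (l : ℝ) + 1) * ((l : ℝ) + 1)) := by
  obtain ⟨m, rfl⟩ : ∃ m, l = m + 1 := ⟨l-1, by omega⟩
  have hn : 2 * (m+1) - 1 = 2*m+1 := by omega
  rw [hn, main_n (2*m+1) (by omega) ⟨m, by ring⟩]
  push_cast
  rw [div_eq_div_iff (by positivity) (by nlinarith [sq_nonneg ((m:ℝ)), (show (0:ℝ) ≤ (m:ℝ) from Nat.cast_nonneg m)])]
  ring
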